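/- Let (X,σ) be a binary subshift. If (X,σ) is non-tame, then X admits an uncountable choice domain. -/

import Mathlib

open Filter Topology

noncomputable section

abbrev BinSeq : Type := ℕ → Bool

/-- The left shift on `{0,1}^ℕ`. -/
def binShift (x : BinSeq) : BinSeq := fun n => x (n + 1)

/-- A binary subshift: a nonempty closed shift-invariant subset of `{0,1}^ℕ`. -/
structure BinarySubshift where
  carrier : Set BinSeq
  nonempty : carrier.Nonempty
  isClosed : IsClosed carrier
  shift_mem : ∀ x ∈ carrier, binShift x ∈ carrier

namespace BinarySubshift

variable (X : BinarySubshift)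

/-- The shift map restricted to the subshift. -/
def S : X.carrier → X.carrier := fun x => ⟨binShift x, X.shift_mem x x.2⟩

/-- The (forward) Ellis semigroup `E(X)`: the closure of `{σⁿ : n ≥ 1}` in `X^X`. -/
def Ellis : Set (X.carrier → X.carrier) := closure (Set.range fun n : ℕ => X.S^[n + 1])

/-- `(X,σ)` is non-tame if `|E(X)| > 2^ℵ₀`. -/
def NonTame : Prop := Cardinal.continuum < Cardinal.mk ↥X.Ellis

end BinarySubshift

/-- `𝒯` is a choice domain: for all `m, n`, any `n` distinct points of `𝒯` and any
choice functions `φ¹,…,φⁿ ∈ {0,1}^m` there are times `m < τ₁ < … < τ_m` realising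
the prescribed values. -/
def IsChoiceDomain (𝒯 : Set BinSeq) : Prop :=
  ∀ (m n : ℕ) (x : Fin n → BinSeq), (∀ i, x i ∈ 𝒯) → Function.Injective x →
    ∀ φ : Fin n → Fin m → Bool, ∃ τ : Fin m → ℕ,
      StrictMono τ ∧ (∀ k, m < τ k) ∧ ∀ i k, x i (τ k) = φ i k

/-- `J` is an independence set for the pair `(A0, A1)` in `C`. -/
def IsIndependenceSet (C A0 A1 : Set BinSeq) (J : Set ℕ) : Prop :=
  ∀ I : Finset ℕ, ↑I ⊆ J → ∀ φ : ℕ → Bool, ∃ x ∈ C, ∀ i ∈ I,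
    binShift^[i] x ∈ (if φ i = true then A1 else A0)

namespace AuxST6
open BinarySubshift

lemma binShift_iter (k : ℕ) (y : BinSeq) (n : ℕ) : binShift^[k] y n = y (n + k) := by
  induction k generalizing y n with
  | zero => rfl
  | succ k ih =>
    rw [Function.iterate_succ_apply, ih (binShift y) n]
    show y (n + k + 1) = y (n + (k+1)); ring_nf

variable (X : BinarySubshift)

lemma S_iter_val (k : ℕ) (x : X.carrier) : (X.S^[k] x).1 = binShift^[k] x.1 := by
  induction k generalizing x with
  | zero => rfl
  | succ k ih =>
    rw [Function.iterate_succ_apply, Function.iterate_succ_apply, ih (X.S x)]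
    rfl

def limset (U : Ultrafilter ℕ) : Set X.carrier := {x | {n | x.1 n = true} ∈ U}

lemma exists_ultrafilter_tendsto {K : Type*} [TopologicalSpace K] (a : ℕ → K) (p : K)
    (hp : p ∈ closure (Set.range a)) : ∃ U : Ultrafilter ℕ, Tendsto a U (𝓝 p) := by
  have hne : (Filter.comap a (𝓝 p)).NeBot := by
    rw [Filter.comap_neBot_iff]
    intro t ht
    rcases mem_closure_iff_nhds.1 hp t ht with ⟨y, hyt, n, rfl⟩
    exact ⟨n, hyt⟩
  rcases Filter.exists_ultrafilter_le (Filter.comap a (𝓝 p)) with ⟨U, hU⟩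
  exact ⟨U, Filter.tendsto_iff_comap.2 hU⟩

lemma ellis_repr {p : X.carrier → X.carrier} (hp : p ∈ X.Ellis) :
    ∃ U : Ultrafilter ℕ, ∀ (x : X.carrier) (ℓ : ℕ),
      ((p x).1 ℓ = true ↔ X.S^[ℓ+1] x ∈ limset X U) := by
  rcases exists_ultrafilter_tendsto (fun n : ℕ => X.S^[n + 1]) p hp with ⟨U, hU⟩
  refine ⟨U, fun x ℓ => ?_⟩
  have h1 : Tendsto (fun n : ℕ => (X.S^[n+1] x).1 ℓ) U (𝓝 ((p x).1 ℓ)) := by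
    have := hU
    rw [tendsto_pi_nhds] at this
    have h2 := (this x)
    have h3 : Tendsto (fun n : ℕ => (X.S^[n+1] x).1) U (𝓝 ((p x).1)) :=
      ((continuous_subtype_val.tendsto (p x)).comp h2)
    rw [tendsto_pi_nhds] at h3
    exact h3 ℓ
  have hE : {n : ℕ | (X.S^[n+1] x).1 ℓ = (p x).1 ℓ} ∈ U := by
    have h4 : {(p x).1 ℓ} ∈ 𝓝 ((p x).1 ℓ) := by
      rw [mem_nhds_discrete]; exact rfl
    have h5 := h1 h4
    exact h5
  have hval : ∀ n : ℕ, (X.S^[n+1] x).1 ℓ = x.1 (ℓ + (n+1)) := by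
    intro n; rw [S_iter_val, binShift_iter]
  have hval2 : ∀ n : ℕ, (X.S^[ℓ+1] x).1 n = x.1 (ℓ + (n+1)) := by
    intro n; rw [S_iter_val, binShift_iter, show n + (ℓ+1) = ℓ + (n+1) from by omega]
  constructor
  · intro htrue
    have : {n : ℕ | (X.S^[ℓ+1] x).1 n = true} ∈ U := by
      refine U.1.sets_of_superset hE ?_
      intro n hn
      simp only [Set.mem_setOf_eq] at hn ⊢
      rw [hval2 n, ← hval n, hn, htrue]
    exact this
  · intro hmem
    by_contra hne
    have hfalse : (p x).1 ℓ = false := by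
      cases h : (p x).1 ℓ; rfl; exact absurd h hne
    have hA : {n : ℕ | (X.S^[ℓ+1] x).1 n = true} ∈ U := hmem
    have : ({n : ℕ | (X.S^[ℓ+1] x).1 n = true} ∩ {n : ℕ | (X.S^[n+1] x).1 ℓ = (p x).1 ℓ} : Set ℕ) ∈ U :=
      Filter.inter_mem hA hE
    rcases Ultrafilter.nonempty_of_mem this with ⟨n, hn1, hn2⟩
    simp only [Set.mem_setOf_eq] at hn1 hn2
    rw [hval n, ← hval2 n, hn1, hfalse] at hn2
    exact Bool.true_eq_false.mp hn2

lemma mk_range_limset (h : X.NonTame) :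
    Cardinal.continuum < Cardinal.mk ↥(Set.range (limset X)) := by
  refine lt_of_lt_of_le h ?_
  have : ∀ p : ↥X.Ellis, ∃ U : Ultrafilter ℕ, ∀ (x : X.carrier) (ℓ : ℕ),
      (((p : X.carrier → X.carrier) x).1 ℓ = true ↔ X.S^[ℓ+1] x ∈ limset X U) :=
    fun p => ellis_repr X p.2
  choose Uf hUf using this
  refine Cardinal.mk_le_of_injective (f := fun p => (⟨limset X (Uf p), ⟨Uf p, rfl⟩⟩ :
    ↥(Set.range (limset X)))) ?_
  intro p q hpq
  have hs : limset X (Uf p) = limset X (Uf q) := congrArg Subtype.val hpq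
  have : (p : X.carrier → X.carrier) = (q : X.carrier → X.carrier) := by
    funext x
    apply Subtype.ext
    funext ℓ
    have h1 := hUf p x ℓ
    have h2 := hUf q x ℓ
    rw [hs] at h1
    rw [← h2] at h1
    exact Bool.eq_iff_iff.mpr h1
  exact Subtype.ext this

end AuxST6

namespace AuxST6
open MeasurableSpace TopologicalSpace
open scoped MeasureTheory

section Meas
variable {α : Type*} [TopologicalSpace α] [SecondCountableTopology α]

def m0 (α : Type*) [TopologicalSpace α] [SecondCountableTopology α] : MeasurableSpace α :=
  MeasurableSpace.generateFrom (countableBasis α)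

lemma meas_of_isOpen {O : Set α} (hO : IsOpen O) : MeasurableSet[m0 α] O := by
  rcases (isBasis_countableBasis α).open_eq_sUnion hO with ⟨S, hS, rfl⟩
  refine MeasurableSet.sUnion ((countable_countableBasis α).mono hS) ?_
  exact fun t ht => measurableSet_generateFrom (hS ht)

/-- If every nonempty closed set has a relatively open piece on which membership in `s`
is constant, then `s` is measurable for the σ-algebra generated by a countable basis. -/
lemma meas_of_constancy (s : Set α)
    (P : ∀ F : Set α, IsClosed F → F.Nonempty →
      ∃ O, IsOpen O ∧ (O ∩ F).Nonempty ∧ ((O ∩ F ⊆ s) ∨ (O ∩ F ∩ s = ∅))) :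
    MeasurableSet[m0 α] s := by
  classical
  set C : Set (Set α) := {b ∈ countableBasis α | MeasurableSet[m0 α] (b ∩ s)} with hC
  set G : Set α := ⋃₀ C with hG
  have hCc : C.Countable := (countable_countableBasis α).mono (fun b hb => hb.1)
  have hGmeas : MeasurableSet[m0 α] G :=
    MeasurableSet.sUnion hCc (fun t ht => meas_of_isOpen ((isBasis_countableBasis α).isOpen ht.1))
  have hGs : MeasurableSet[m0 α] (G ∩ s) := by
    have : G ∩ s = ⋃₀ {t | ∃ b ∈ C, t = b ∩ s} := by
      ext x
      simp only [Set.mem_inter_iff, Set.mem_sUnion, Set.mem_setOf_eq, hG]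
      constructor
      · rintro ⟨⟨b, hb, hxb⟩, hxs⟩; exact ⟨b ∩ s, ⟨b, hb, rfl⟩, hxb, hxs⟩
      · rintro ⟨t, ⟨b, hb, rfl⟩, hxb, hxs⟩; exact ⟨⟨b, hb, hxb⟩, hxs⟩
    rw [this]
    refine MeasurableSet.sUnion ?_ ?_
    · have : {t | ∃ b ∈ C, t = b ∩ s} = (fun b => b ∩ s) '' C := by
        ext t; simp [eq_comm]
      rw [this]; exact hCc.image _
    · rintro t ⟨b, hb, rfl⟩; exact hb.2
  have hGuniv : G = Set.univ := by
    by_contra hne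
    have hFne : Gᶜ.Nonempty := by
      rcases Set.ne_univ_iff_exists_notMem G |>.1 hne with ⟨x, hx⟩
      exact ⟨x, hx⟩
    have hGopen : IsOpen G :=
      isOpen_sUnion (fun t ht => (isBasis_countableBasis α).isOpen ht.1)
    rcases P Gᶜ hGopen.isClosed_compl hFne with ⟨O, hOopen, ⟨x, hxO, hxF⟩, hconst⟩
    rcases (isBasis_countableBasis α).exists_subset_of_mem_open hxO hOopen with ⟨b, hbB, hxb, hbO⟩
    have hbmeas : MeasurableSet[m0 α] (b ∩ s) := by
      have hsplit : b ∩ s = (b ∩ Gᶜ ∩ s) ∪ (b ∩ (G ∩ s)) := by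
        ext y
        by_cases hy : y ∈ G <;> simp [hy]
      rw [hsplit]
      refine MeasurableSet.union ?_ ?_
      · rcases hconst with hsub | hdisj
        · have : b ∩ Gᶜ ∩ s = b ∩ Gᶜ := by
            apply Set.inter_eq_self_of_subset_left
            intro y hy
            exact hsub ⟨hbO hy.1, hy.2⟩
          rw [this]
          exact (meas_of_isOpen ((isBasis_countableBasis α).isOpen hbB)).inter hGmeas.compl
        · have : b ∩ Gᶜ ∩ s = ∅ := by
            apply Set.eq_empty_of_subset_empty
            intro y ⟨⟨hyb, hyF⟩, hys⟩
            rw [← hdisj]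
            exact ⟨⟨hbO hyb, hyF⟩, hys⟩
          rw [this]; exact @MeasurableSet.empty _ (m0 α)
      · exact (meas_of_isOpen ((isBasis_countableBasis α).isOpen hbB)).inter hGs
    have : x ∈ G := ⟨b, ⟨hbB, hbmeas⟩, hxb⟩
    exact hxF this
  have : s = G ∩ s := by rw [hGuniv, Set.univ_inter]
  rw [this]; exact hGs

end Meas
end AuxST6

namespace AuxST6
open MeasurableSpace TopologicalSpace
open scoped MeasureTheory

variable (X : BinarySubshift)

/-- nonprincipal -/
def NP (U : Ultrafilter ℕ) : Prop := ∀ s : Set ℕ, s.Finite → s ∉ U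

lemma exists_dense_pair (hbig : Cardinal.continuum < Cardinal.mk ↥(Set.range (limset X))) :
    ∃ (U : Ultrafilter ℕ) (F : Set X.carrier), NP U ∧ IsClosed F ∧ F.Nonempty ∧
      (∀ x ∈ F, x ∈ closure (F ∩ limset X U)) ∧ (∀ x ∈ F, x ∈ closure (F \ limset X U)) := by
  by_contra hcon
  -- every limset is measurable
  have hmeas : ∀ U : Ultrafilter ℕ, MeasurableSet[m0 X.carrier] (limset X U) := by
    intro U
    by_cases hNP : NP U
    · refine meas_of_constancy _ (fun F hFcl hFne => ?_)
      have hd' : ¬((∀ x ∈ F, x ∈ closure (F ∩ limset X U)) ∧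
          (∀ x ∈ F, x ∈ closure (F \ limset X U))) :=
        fun hboth => hcon ⟨U, F, hNP, hFcl, hFne, hboth.1, hboth.2⟩
      rcases not_and_or.1 hd' with hd | hd
      · -- F ∩ limset not dense
        push_neg at hd
        rcases hd with ⟨x, hxF, hx⟩
        rcases mem_closure_iff.not.1 hx with h
        push_neg at h
        rcases h with ⟨O, hOopen, hxO, hOdisj⟩
        refine ⟨O, hOopen, ⟨x, hxO, hxF⟩, Or.inr ?_⟩
        rw [Set.inter_assoc]
        exact hOdisj
      · push_neg at hd
        rcases hd with ⟨x, hxF, hx⟩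
        rcases mem_closure_iff.not.1 hx with h
        push_neg at h
        rcases h with ⟨O, hOopen, hxO, hOdisj⟩
        refine ⟨O, hOopen, ⟨x, hxO, hxF⟩, Or.inl ?_⟩
        intro y ⟨hyO, hyF⟩
        by_contra hys
        have : y ∈ O ∩ (F \ limset X U) := ⟨hyO, hyF, hys⟩
        rw [hOdisj] at this
        exact this
    · -- principal case
      rw [NP] at hNP
      push_neg at hNP
      rcases hNP with ⟨s, hsfin, hsU⟩
      rcases Ultrafilter.eq_pure_of_finite_mem hsfin hsU with ⟨n, _, rfl⟩
      have : limset X (pure n) = {x : X.carrier | x.1 n = true} := by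
        ext x; simp [limset]
      rw [this]
      apply meas_of_isOpen
      have : Continuous (fun x : X.carrier => x.1 n) :=
        (continuous_apply n).comp continuous_subtype_val
      exact (isOpen_discrete {true}).preimage this
  -- counting
  have hinj : ∃ f : ↥(Set.range (limset X)) → ↥{t | MeasurableSet[m0 X.carrier] t},
      Function.Injective f := by
    refine ⟨fun s => ⟨s.1, ?_⟩, ?_⟩
    · rcases s.2 with ⟨U, hU⟩
      rw [← hU]; exact hmeas U
    · intro a b hab
      simp only [Subtype.mk.injEq] at hab
      exact Subtype.ext hab
  rcases hinj with ⟨f, hf⟩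
  have hle : Cardinal.mk ↥(Set.range (limset X)) ≤ Cardinal.continuum := by
    refine (Cardinal.mk_le_of_injective hf).trans ?_
    refine MeasurableSpace.cardinal_measurableSet_le_continuum ?_
    exact ((countable_countableBasis X.carrier).le_aleph0).trans Cardinal.aleph0_le_continuum
  exact absurd hbig (not_lt.2 hle)

end AuxST6

namespace AuxST6
open Filter Topology

variable (X : BinarySubshift)

def InvP (F : Set X.carrier) (k : ℕ)
    (σ : (ℕ → ℕ) × ((ℕ → Bool) → Set X.carrier)) : Prop :=
  (∀ j j', j < j' → j' < k → σ.1 j < σ.1 j') ∧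
  (∀ t, IsOpen (σ.2 t)) ∧
  (∀ t, (σ.2 t ∩ F).Nonempty) ∧
  (∀ t, ∀ x ∈ σ.2 t ∩ F, ∀ j, j < k → x.1 (σ.1 j) = t j) ∧
  (∀ t t', (∀ j, j < k → t j = t' j) → σ.2 t = σ.2 t')

lemma step_ex (U : Ultrafilter ℕ) (F : Set X.carrier) (hNP : NP U)
    (hd1 : ∀ x ∈ F, x ∈ closure (F ∩ limset X U))
    (hd0 : ∀ x ∈ F, x ∈ closure (F \ limset X U))
    (k : ℕ) (σ : (ℕ → ℕ) × ((ℕ → Bool) → Set X.carrier)) (hσ : InvP X F k σ) :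
    ∃ σ', InvP X F (k+1) σ' ∧ ∀ j, j ≠ k → σ'.1 j = σ.1 j := by
  classical
  obtain ⟨hmono, hopen, hne, hpat, hdep⟩ := hσ
  have ha : ∀ t : ℕ → Bool, ∃ y, y ∈ σ.2 t ∩ F ∧ y ∈ limset X U := by
    intro t
    rcases hne t with ⟨w, hw1, hw2⟩
    rcases mem_closure_iff.1 (hd1 w hw2) (σ.2 t) (hopen t) hw1 with ⟨y, hyO, hyF, hyL⟩
    exact ⟨y, ⟨hyO, hyF⟩, hyL⟩
  have hb : ∀ t : ℕ → Bool, ∃ y, y ∈ σ.2 t ∩ F ∧ y ∉ limset X U := by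
    intro t
    rcases hne t with ⟨w, hw1, hw2⟩
    rcases mem_closure_iff.1 (hd0 w hw2) (σ.2 t) (hopen t) hw1 with ⟨y, hyO, hyF, hyL⟩
    exact ⟨y, ⟨hyO, hyF⟩, hyL⟩
  set A : (ℕ → Bool) → X.carrier := fun t => Classical.choose (ha t) with hA
  set B : (ℕ → Bool) → X.carrier := fun t => Classical.choose (hb t) with hB
  have hAspec : ∀ t, A t ∈ σ.2 t ∩ F ∧ A t ∈ limset X U := fun t => Classical.choose_spec (ha t)
  have hBspec : ∀ t, B t ∈ σ.2 t ∩ F ∧ B t ∉ limset X U := fun t => Classical.choose_spec (hb t)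
  -- canonicity
  have keyA : ∀ t t', σ.2 t = σ.2 t' → A t = A t' := by
    intro t t' h
    have : ∀ (V W : Set X.carrier) (hV : ∃ y, y ∈ V ∩ F ∧ y ∈ limset X U)
        (hW : ∃ y, y ∈ W ∩ F ∧ y ∈ limset X U), V = W →
        Classical.choose hV = Classical.choose hW := by
      intro V W hV hW hVW
      subst hVW
      rfl
    exact this _ _ (ha t) (ha t') h
  have keyB : ∀ t t', σ.2 t = σ.2 t' → B t = B t' := by
    intro t t' h
    have : ∀ (V W : Set X.carrier) (hV : ∃ y, y ∈ V ∩ F ∧ y ∉ limset X U)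
        (hW : ∃ y, y ∈ W ∩ F ∧ y ∉ limset X U), V = W →
        Classical.choose hV = Classical.choose hW := by
      intro V W hV hW hVW
      subst hVW
      rfl
    exact this _ _ (hb t) (hb t') h
  -- the finite truncation
  set ι : (Fin k → Bool) → (ℕ → Bool) := fun s j => if h : j < k then s ⟨j, h⟩ else false with hι
  set E : (ℕ → Bool) → (ℕ → Bool) := fun t => ι (fun j => t j.1) with hE
  have hEagree : ∀ t, σ.2 (E t) = σ.2 t := by
    intro t
    apply hdep
    intro j hj
    simp [hE, hι, hj]
  set L : ℕ := (Finset.range k).sup σ.1 with hL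
  have hbig : ((⋂ s : Fin k → Bool,
      ({n | (A (ι s)).1 n = true} ∩ {n | (B (ι s)).1 n = true}ᶜ)) ∩ (Set.Ioi L)) ∈ U := by
    refine Filter.inter_mem ?_ ?_
    · refine Filter.iInter_mem.2 (fun s => Filter.inter_mem ?_ ?_)
      · exact (hAspec (ι s)).2
      · exact (Ultrafilter.compl_mem_iff_notMem).2 (hBspec (ι s)).2
    · have h1 : Set.Iic L ∉ U := hNP _ (Set.finite_Iic L)
      have h2 : (Set.Iic L)ᶜ ∈ U := (Ultrafilter.compl_mem_iff_notMem).2 h1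
      rwa [Set.compl_Iic] at h2
  obtain ⟨m, hm⟩ := Ultrafilter.nonempty_of_mem hbig
  obtain ⟨hmbig, hmL⟩ := hm
  have hmA : ∀ s : Fin k → Bool, (A (ι s)).1 m = true := by
    intro s
    have := Set.mem_iInter.1 hmbig s
    exact this.1
  have hmB : ∀ s : Fin k → Bool, (B (ι s)).1 m = false := by
    intro s
    have := (Set.mem_iInter.1 hmbig s).2
    simp only [Set.mem_compl_iff, Set.mem_setOf_eq] at this
    cases hb2 : (B (ι s)).1 m
    · rfl
    · exact absurd hb2 this
  refine ⟨(Function.update σ.1 k m, fun t => σ.2 t ∩ {x | x.1 m = t k}), ⟨?_, ?_, ?_, ?_, ?_⟩, ?_⟩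
  · -- strict mono
    intro j j' hjj' hj'
    dsimp only
    rcases Nat.lt_succ_iff_lt_or_eq.1 hj' with h | h
    · rw [Function.update_of_ne (by omega), Function.update_of_ne (by omega)]
      exact hmono j j' hjj' h
    · subst h
      rw [Function.update_of_ne (by omega), Function.update_self]
      calc σ.1 j ≤ L := Finset.le_sup (Finset.mem_range.2 hjj')
        _ < m := hmL
  · intro t
    dsimp only
    refine (hopen t).inter ?_
    have hc : Continuous (fun x : X.carrier => x.1 m) :=
      (continuous_apply m).comp continuous_subtype_val
    exact (isOpen_discrete {b : Bool | b = t k}).preimage hc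
  · intro t
    dsimp only
    set s : Fin k → Bool := fun j => t j.1 with hs
    have hagree : σ.2 (ι s) = σ.2 t := hEagree t
    cases htk : t k
    · refine ⟨B (ι s), ⟨?_, ?_⟩, ?_⟩
      · rw [← hagree]; exact (hBspec (ι s)).1.1
      · show (B (ι s)).1 m = false
        exact hmB s
      · exact (hBspec (ι s)).1.2
    · refine ⟨A (ι s), ⟨?_, ?_⟩, ?_⟩
      · rw [← hagree]; exact (hAspec (ι s)).1.1
      · show (A (ι s)).1 m = true
        exact hmA s
      · exact (hAspec (ι s)).1.2
  · rintro t x ⟨⟨hx1, hx2⟩, hxF⟩ j hj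
    dsimp only
    rcases Nat.lt_succ_iff_lt_or_eq.1 hj with h | h
    · rw [Function.update_of_ne (by omega)]
      exact hpat t x ⟨hx1, hxF⟩ j h
    · subst h
      rw [Function.update_self]
      exact hx2
  · intro t t' hag
    have h1 : σ.2 t = σ.2 t' := hdep t t' (fun j hj => hag j (by omega))
    have h2 : t k = t' k := hag k (by omega)
    dsimp only
    rw [h1, h2]
  · intro j hj
    exact Function.update_of_ne hj _ _

lemma exists_shattering (U : Ultrafilter ℕ) (F : Set X.carrier) (hNP : NP U)
    (hFne : F.Nonempty)
    (hd1 : ∀ x ∈ F, x ∈ closure (F ∩ limset X U))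
    (hd0 : ∀ x ∈ F, x ∈ closure (F \ limset X U)) :
    ∃ J : ℕ → ℕ, StrictMono J ∧
      ∀ (k : ℕ) (t : Fin k → Bool), ∃ x : X.carrier, ∀ j : Fin k, x.1 (J j) = t j := by
  classical
  have base : InvP X F 0 (fun _ => 0, fun _ => Set.univ) := by
    refine ⟨fun j j' _ h => absurd h (Nat.not_lt_zero _), fun _ => isOpen_univ,
      fun _ => by simpa using hFne, fun t x _ j hj => absurd hj (Nat.not_lt_zero _),
      fun _ _ _ => rfl⟩
  -- build the chain
  let g : ∀ k : ℕ, {σ // InvP X F k σ} := fun k => Nat.rec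
    ⟨(fun _ => 0, fun _ => Set.univ), base⟩
    (fun k ih => ⟨Classical.choose (step_ex X U F hNP hd1 hd0 k ih.1 ih.2),
      (Classical.choose_spec (step_ex X U F hNP hd1 hd0 k ih.1 ih.2)).1⟩) k
  have hsucc : ∀ k, (g (k+1)).1 = Classical.choose
      (step_ex X U F hNP hd1 hd0 k (g k).1 (g k).2) := fun k => rfl
  have hstep : ∀ k j, j ≠ k → (g (k+1)).1.1 j = (g k).1.1 j := by
    intro k j hj
    rw [hsucc k]
    exact (Classical.choose_spec (step_ex X U F hNP hd1 hd0 k (g k).1 (g k).2)).2 j hj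
  set J : ℕ → ℕ := fun j => (g (j+1)).1.1 j with hJ
  have hstab : ∀ j k, j < k → (g k).1.1 j = J j := by
    intro j k hjk
    induction k with
    | zero => omega
    | succ k ih =>
      rcases Nat.lt_succ_iff_lt_or_eq.1 hjk with h | h
      · rw [hstep k j (by omega)]
        exact ih h
      · subst h; rfl
  have hmonoJ : StrictMono J := by
    apply strictMono_nat_of_lt_succ
    intro k
    have h1 : (g (k+2)).1.1 k = J k := hstab k (k+2) (by omega)
    have h2 : (g (k+2)).1.1 (k+1) = J (k+1) := hstab (k+1) (k+2) (by omega)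
    rw [← h1, ← h2]
    exact (g (k+2)).2.1 k (k+1) (by omega) (by omega)
  refine ⟨J, hmonoJ, ?_⟩
  intro k t
  set tt : ℕ → Bool := fun j => if h : j < k then t ⟨j, h⟩ else false with htt
  obtain ⟨hmono, hopen, hne, hpat, hdep⟩ := (g k).2
  rcases hne tt with ⟨x, hx1, hx2⟩
  refine ⟨x, fun j => ?_⟩
  have h1 := hpat tt x ⟨hx1, hx2⟩ j.1 j.2
  rw [hstab j.1 k j.2] at h1
  rw [h1]
  simp [htt, j.2]

end AuxST6

namespace AuxST6
open Filter Topology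

variable (X : BinarySubshift)

lemma exists_realizer (J : ℕ → ℕ)
    (hJ : ∀ (k : ℕ) (t : Fin k → Bool), ∃ x : X.carrier, ∀ j : Fin k, x.1 (J j) = t j) :
    ∀ η : ℕ → Bool, ∃ x ∈ X.carrier, ∀ k, x (J k) = η k := by
  intro η
  set C : ℕ → Set BinSeq := fun k => X.carrier ∩ {y | ∀ j, j ≤ k → y (J j) = η j} with hC
  have hdec : ∀ k, C (k+1) ⊆ C k := by
    intro k y ⟨hy1, hy2⟩
    exact ⟨hy1, fun j hj => hy2 j (by omega)⟩
  have hne : ∀ k, (C k).Nonempty := by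
    intro k
    rcases hJ (k+1) (fun j => η j.1) with ⟨x, hx⟩
    refine ⟨x.1, x.2, fun j hj => hx ⟨j, by omega⟩⟩
  have hclosed : ∀ k, IsClosed (C k) := by
    intro k
    refine X.isClosed.inter ?_
    have : {y : BinSeq | ∀ j, j ≤ k → y (J j) = η j} =
        ⋂ j, ⋂ (_ : j ≤ k), {y : BinSeq | y (J j) = η j} := by
      ext y; simp
    rw [this]
    refine isClosed_iInter (fun j => isClosed_iInter (fun _ => ?_))
    have hcont : Continuous (fun y : BinSeq => y (J j)) := continuous_apply _
    exact IsClosed.preimage hcont (isClosed_discrete {b : Bool | b = η j})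
  have hcomp : IsCompact (C 0) := (hclosed 0).isCompact
  have hint := IsCompact.nonempty_iInter_of_sequence_nonempty_isCompact_isClosed C hdec hne
    hcomp hclosed
  rcases hint with ⟨x, hx⟩
  rw [Set.mem_iInter] at hx
  exact ⟨x, (hx 0).1, fun k => (hx k).2 k le_rfl⟩

-- Independent family on a countable set
abbrev Om : Type := Finset ℚ × Finset (Finset ℚ)

def indA (r : ℝ) : Set Om := {p | p.1.filter (fun q : ℚ => (q : ℝ) < r) ∈ p.2}

lemma indA_infinite {n : ℕ} (r : Fin n → ℝ) (hr : Function.Injective r) (ψ : Fin n → Bool) :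
    {ω : Om | ∀ i, (ω ∈ indA (r i) ↔ ψ i = true)}.Infinite := by
  classical
  -- separating rationals
  have hsep : ∀ i j : Fin n, r i < r j → ∃ q : ℚ, r i < q ∧ (q : ℝ) < r j := by
    intro i j hij
    exact exists_rat_btwn hij
  choose qsep hq1 hq2 using hsep
  set sep : Finset ℚ :=
    Finset.univ.biUnion (fun i : Fin n => Finset.univ.biUnion (fun j : Fin n =>
      if h : r i < r j then {qsep i j h} else ∅)) with hsepdef
  have hmemsep : ∀ (i j : Fin n) (h : r i < r j), qsep i j h ∈ sep := by
    intro i j h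
    apply Finset.mem_biUnion.2 ⟨i, Finset.mem_univ i, ?_⟩
    apply Finset.mem_biUnion.2 ⟨j, Finset.mem_univ j, ?_⟩
    rw [dif_pos h]
    exact Finset.mem_singleton_self _
  -- a rational above everything
  obtain ⟨M, hM⟩ : ∃ M : ℝ, ∀ i, r i ≤ M := Finite.exists_le r
  obtain ⟨Q, hQ⟩ : ∃ Q : ℚ, M < (Q : ℝ) := exists_rat_gt M
  have hQgt : ∀ i, r i < (Q : ℝ) := fun i => lt_of_le_of_lt (hM i) hQ
  -- the filtered traces are injective for any s ⊇ sep
  have htrace : ∀ (s : Finset ℚ), sep ⊆ s → ∀ i j : Fin n,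
      s.filter (fun q : ℚ => (q : ℝ) < r i) = s.filter (fun q : ℚ => (q : ℝ) < r j) → i = j := by
    intro s hs i j hfil
    by_contra hij
    have hrij : r i ≠ r j := fun h => hij (hr h)
    rcases lt_or_gt_of_ne hrij with h | h
    · have h1 : qsep i j h ∈ s.filter (fun q : ℚ => (q : ℝ) < r j) :=
        Finset.mem_filter.2 ⟨hs (hmemsep i j h), hq2 i j h⟩
      rw [← hfil] at h1
      exact absurd (Finset.mem_filter.1 h1).2 (not_lt.2 (le_of_lt (hq1 i j h)))
    · have h1 : qsep j i h ∈ s.filter (fun q : ℚ => (q : ℝ) < r i) :=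
        Finset.mem_filter.2 ⟨hs (hmemsep j i h), hq2 j i h⟩
      rw [hfil] at h1
      exact absurd (Finset.mem_filter.1 h1).2 (not_lt.2 (le_of_lt (hq1 j i h)))
  -- witnesses
  set ws : ℕ → Finset ℚ := fun k => sep ∪ (Finset.range k).image (fun j : ℕ => Q + (j : ℚ)) with hws
  have hwssep : ∀ k, sep ⊆ ws k := fun k => Finset.subset_union_left
  set wT : ℕ → Finset (Finset ℚ) := fun k =>
    (Finset.univ.filter (fun i : Fin n => ψ i = true)).image
      (fun i => (ws k).filter (fun q : ℚ => (q : ℝ) < r i)) with hwT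
  set w : ℕ → Om := fun k => (ws k, wT k) with hw
  have hwmem : ∀ k, w k ∈ {ω : Om | ∀ i, (ω ∈ indA (r i) ↔ ψ i = true)} := by
    intro k i
    constructor
    · intro hmem
      rcases Finset.mem_image.1 (show (ws k).filter (fun q : ℚ => (q : ℝ) < r i) ∈ wT k from hmem) with ⟨i', hi', heq⟩
      have : i' = i := htrace (ws k) (hwssep k) i' i heq
      subst this
      exact (Finset.mem_filter.1 hi').2
    · intro hψ
      show (ws k).filter (fun q : ℚ => (q : ℝ) < r i) ∈ wT k
      exact Finset.mem_image.2 ⟨i, Finset.mem_filter.2 ⟨Finset.mem_univ i, hψ⟩, rfl⟩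
  have hsepQ : ∀ q ∈ sep, q < Q := by
    intro q hq
    rcases Finset.mem_biUnion.1 hq with ⟨i, _, hq2'⟩
    rcases Finset.mem_biUnion.1 hq2' with ⟨j, _, hq3⟩
    by_cases h : r i < r j
    · rw [dif_pos h] at hq3
      rw [Finset.mem_singleton.1 hq3]
      have : (qsep i j h : ℝ) < (Q : ℝ) := lt_trans (hq2 i j h) (lt_of_le_of_lt (hM j) hQ)
      exact_mod_cast this
    · rw [dif_neg h] at hq3
      exact absurd hq3 (Finset.notMem_empty q)
  have hQinj : Function.Injective (fun j : ℕ => Q + (j : ℚ)) := by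
    intro a b hab
    have : (a : ℚ) = (b : ℚ) := by
      have := hab
      simpa using this
    exact_mod_cast this
  have hcard : ∀ k, (ws k).card = sep.card + k := by
    intro k
    have hdisj : Disjoint sep ((Finset.range k).image (fun j : ℕ => Q + (j : ℚ))) := by
      rw [Finset.disjoint_left]
      intro q hq hq'
      rcases Finset.mem_image.1 hq' with ⟨j, _, rfl⟩
      have h1 : Q + (j : ℚ) < Q := hsepQ _ hq
      have h2 : (0 : ℚ) ≤ (j : ℚ) := Nat.cast_nonneg j
      linarith
    rw [hws]
    rw [Finset.card_union_of_disjoint hdisj, Finset.card_image_of_injective _ hQinj,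
      Finset.card_range]
  have hwinj : Function.Injective w := by
    intro a b hab
    have h1 : ws a = ws b := congrArg Prod.fst hab
    have := hcard a
    rw [h1, hcard b] at this
    omega
  exact Set.infinite_of_injective_forall_mem hwinj hwmem

end AuxST6

namespace AuxST6
open Filter Topology

lemma exists_strictmono_in {m : ℕ} (W : Fin m → Set ℕ) (hW : ∀ k, (W k).Infinite) (b : ℕ) :
    ∃ τ : Fin m → ℕ, StrictMono τ ∧ (∀ k, b < τ k) ∧ ∀ k, τ k ∈ W k := by
  classical
  set W' : ℕ → Set ℕ := fun k => if h : k < m then W ⟨k, h⟩ else Set.univ with hW'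
  have hW'inf : ∀ k, (W' k).Infinite := by
    intro k
    rw [hW']
    dsimp only
    split
    · exact hW _
    · exact Set.infinite_univ
  let g : ℕ → ℕ := fun k => Nat.rec (Classical.choose ((hW'inf 0).exists_gt b))
      (fun k ih => Classical.choose ((hW'inf (k+1)).exists_gt ih)) k
  have hg0 : g 0 ∈ W' 0 ∧ b < g 0 := Classical.choose_spec ((hW'inf 0).exists_gt b)
  have hgs : ∀ k, g (k+1) ∈ W' (k+1) ∧ g k < g (k+1) := by
    intro k
    exact Classical.choose_spec ((hW'inf (k+1)).exists_gt (g k))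
  have hgmono : StrictMono g := strictMono_nat_of_lt_succ (fun k => (hgs k).2)
  have hgmem : ∀ k, g k ∈ W' k := by
    intro k
    cases k with
    | zero => exact hg0.1
    | succ k => exact (hgs k).1
  refine ⟨fun k => g k.1, ?_, ?_, ?_⟩
  · intro a b hab
    exact hgmono hab
  · intro k
    calc b < g 0 := hg0.2
      _ ≤ g k.1 := hgmono.monotone (Nat.zero_le _)
  · intro k
    have := hgmem k.1
    rw [hW'] at this
    dsimp only at this
    rw [dif_pos k.2] at this
    rwa [Fin.eta] at this

lemma pair_inj {r r' : ℝ} (h : r ≠ r') : Function.Injective (![r, r'] : Fin 2 → ℝ) := by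
  intro i j hij
  fin_cases i <;> fin_cases j <;> simp_all

end AuxST6

/-- A non-tame binary subshift admits an uncountable choice
domain. -/
theorem subshift_nontame_implies_uncountable_choice_domain (X : BinarySubshift)
    (h : X.NonTame) :
    ∃ 𝒯 ⊆ X.carrier, ¬𝒯.Countable ∧ IsChoiceDomain 𝒯 := by
  classical
  obtain ⟨U, F, hNP, hFcl, hFne, hd1, hd0⟩ :=
    AuxST6.exists_dense_pair X (AuxST6.mk_range_limset X h)
  obtain ⟨J, hJmono, hJsh⟩ := AuxST6.exists_shattering X U F hNP hFne hd1 hd0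
  have hreal := AuxST6.exists_realizer X J hJsh
  obtain ⟨instD⟩ := nonempty_denumerable AuxST6.Om
  set ε : ℕ ≃ AuxST6.Om := (@Denumerable.eqv AuxST6.Om instD).symm with hε
  set η : ℝ → ℕ → Bool := fun r ℓ => if ε ℓ ∈ AuxST6.indA r then true else false with hη
  -- η transfers independence
  have hηind : ∀ (n : ℕ) (ri : Fin n → ℝ), Function.Injective ri → ∀ ψ : Fin n → Bool,
      {ℓ : ℕ | ∀ i, η (ri i) ℓ = ψ i}.Infinite := by
    intro n ri hri ψ
    have hinf := AuxST6.indA_infinite ri hri ψ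
    have himg : (ε.symm '' {ω : AuxST6.Om | ∀ i, (ω ∈ AuxST6.indA (ri i) ↔ ψ i = true)}).Infinite :=
      (Set.infinite_image_iff (ε.symm.injective.injOn)).2 hinf
    refine himg.mono ?_
    rintro ℓ ⟨ω, hω, rfl⟩
    intro i
    have h1 := hω i
    rw [hη]
    dsimp only
    rw [Equiv.apply_symm_apply]
    by_cases hmem : ω ∈ AuxST6.indA (ri i)
    · rw [if_pos hmem]
      exact (h1.1 hmem).symm
    · rw [if_neg hmem]
      cases hψ : ψ i
      · rfl
      · exact absurd (h1.2 hψ) hmem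
  -- realizing points
  have hrealη : ∀ r : ℝ, ∃ x ∈ X.carrier, ∀ k, x (J k) = η r k := fun r => hreal (η r)
  choose xr hxrmem hxrval using hrealη
  have hpair : ∀ r r' : ℝ, r ≠ r' → ∃ ℓ, η r ℓ = true ∧ η r' ℓ = false := by
    intro r r' hne
    have hinf := hηind 2 ![r, r'] (AuxST6.pair_inj hne) ![true, false]
    rcases hinf.nonempty with ⟨ℓ, hℓ⟩
    refine ⟨ℓ, ?_, ?_⟩
    · have := hℓ 0
      simpa using this
    · have := hℓ 1
      simpa using this
  have hxrinj : Function.Injective xr := by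
    intro r r' hrr'
    by_contra hne
    rcases hpair r r' hne with ⟨ℓ, h1, h2⟩
    have : xr r (J ℓ) = xr r' (J ℓ) := by rw [hrr']
    rw [hxrval r ℓ, hxrval r' ℓ, h1, h2] at this
    exact Bool.true_eq_false.mp this
  refine ⟨Set.range xr, ?_, ?_, ?_⟩
  · rintro y ⟨r, rfl⟩
    exact hxrmem r
  · intro hcount
    have : (xr ⁻¹' Set.range xr).Countable := hcount.preimage hxrinj
    have huniv : (xr ⁻¹' Set.range xr) = Set.univ := by
      ext r; simp [Set.mem_range_self]
    rw [huniv] at this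
    exact Cardinal.not_countable_real this
  · -- choice domain
    intro m n x hx hinj φ
    have hri : ∀ i, ∃ r : ℝ, xr r = x i := fun i => hx i
    choose ri hri' using hri
    have hriinj : Function.Injective ri := by
      intro i j hij
      apply hinj
      rw [← hri' i, ← hri' j, hij]
    set W : Fin m → Set ℕ := fun k => {τ | ∀ i, x i τ = φ i k} with hW
    have hWinf : ∀ k, (W k).Infinite := by
      intro k
      have hinf := hηind n ri hriinj (fun i => φ i k)
      have himg : (J '' {ℓ : ℕ | ∀ i, η (ri i) ℓ = φ i k}).Infinite :=
        (Set.infinite_image_iff (hJmono.injective.injOn)).2 hinf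
      refine himg.mono ?_
      rintro τ ⟨ℓ, hℓ, rfl⟩
      intro i
      rw [← hri' i, hxrval (ri i) ℓ]
      exact hℓ i
    obtain ⟨τ, hτmono, hτgt, hτmem⟩ := AuxST6.exists_strictmono_in W hWinf m
    exact ⟨τ, hτmono, hτgt, fun i k => hτmem k i⟩
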